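/- For τ ∈ (0,1], define t_τ > 0 by τ cosh t_τ = 1 and s_τ = (1/2) ∫₀^{t_τ} dt / √(1 - τ² cosh² t). Then s_τ + (1/4) log τ² remains bounded as τ → 0⁺; i.e., there exists C > 0 and τ₀ > 0 such that |s_τ + (1/2) log τ| ≤ C for all τ ∈ (0, τ₀). -/

import Mathlib

set_option maxHeartbeats 1000000

open Real MeasureTheory Set

open intervalIntegral in
theorem delaunay_period_asymptotics :
    ∃ C > 0, ∃ τ₀ > 0, ∀ τ : ℝ, 0 < τ → τ < τ₀ →
      ∀ t : ℝ, 0 < t → τ * Real.cosh t = 1 →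
        |(1 / 2) * (∫ u in (0:ℝ)..t, 1 / Real.sqrt (1 - τ ^ 2 * Real.cosh u ^ 2))
          + (1 / 2) * Real.log τ| ≤ C := by
  refine ⟨2, by norm_num, 1, by norm_num, fun τ hτ _ t ht heq => ?_⟩
  have hcosh1 : (1:ℝ) < Real.cosh t := Real.one_lt_cosh.2 (ne_of_gt ht)
  have hτ1 : τ < 1 := by nlinarith
  have h1τ2 : 0 < 1 - τ ^ 2 := by nlinarith
  have hs : 0 < Real.sqrt (1 - τ ^ 2) := Real.sqrt_pos.2 h1τ2
  have hsinht : 0 ≤ Real.sinh t := Real.sinh_nonneg_iff.2 ht.le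
  -- √(1-τ²) = τ sinh t
  have hsq : Real.sqrt (1 - τ ^ 2) = τ * Real.sinh t := by
    rw [show (1 - τ ^ 2) = (τ * Real.sinh t) ^ 2 by nlinarith [Real.cosh_sq t]]
    exact Real.sqrt_sq (by positivity)
  set f : ℝ → ℝ := fun u => 1 / Real.sqrt (1 - τ ^ 2 * Real.cosh u ^ 2) with hfdef
  set g : ℝ → ℝ := fun u =>
      1 + τ * Real.cosh u / Real.sqrt (1 - τ ^ 2 * Real.cosh u ^ 2) with hgdef
  set G : ℝ → ℝ := fun u =>
      u + Real.arcsin (τ * Real.sinh u / Real.sqrt (1 - τ ^ 2)) with hGdef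
  -- basic facts for u ∈ [0, t)
  have hkey : ∀ u, 0 ≤ u → u < t →
      τ * Real.cosh u < 1 ∧ 0 < 1 - τ ^ 2 * Real.cosh u ^ 2 := by
    intro u hu hut
    have hcu : Real.cosh u < Real.cosh t := by
      rw [Real.cosh_lt_cosh, abs_of_nonneg hu, abs_of_pos ht]; exact hut
    have hcu1 : 1 ≤ Real.cosh u := Real.one_le_cosh u
    have h1 : τ * Real.cosh u < 1 := by nlinarith
    exact ⟨h1, by nlinarith [mul_pos hτ (Real.cosh_pos u)]⟩
  -- pointwise bound f ≤ g on [0, t]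
  have hbound : ∀ u ∈ Icc 0 t, f u ≤ g u := by
    intro u ⟨hu, hut⟩
    rcases eq_or_lt_of_le hut with rfl | hlt
    · have hA : 1 - τ ^ 2 * Real.cosh u ^ 2 = 0 := by nlinarith
      simp [hfdef, hgdef, hA]
    · obtain ⟨h1, hA⟩ := hkey u hu hlt
      have hsA : 0 < Real.sqrt (1 - τ ^ 2 * Real.cosh u ^ 2) := Real.sqrt_pos.2 hA
      have hτc : 0 ≤ τ * Real.cosh u := by positivity
      have hle : 1 - τ * Real.cosh u ≤ Real.sqrt (1 - τ ^ 2 * Real.cosh u ^ 2) := by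
        rw [Real.le_sqrt (by linarith) hA.le]; nlinarith
      have h2 : (1 - τ * Real.cosh u) / Real.sqrt (1 - τ ^ 2 * Real.cosh u ^ 2) ≤ 1 :=
        (div_le_one hsA).2 hle
      have h4 : (1:ℝ) / Real.sqrt (1 - τ ^ 2 * Real.cosh u ^ 2)
          = (1 - τ * Real.cosh u) / Real.sqrt (1 - τ ^ 2 * Real.cosh u ^ 2)
            + τ * Real.cosh u / Real.sqrt (1 - τ ^ 2 * Real.cosh u ^ 2) := by
        rw [← add_div, sub_add_cancel]
      simp only [hfdef, hgdef]
      rw [h4]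
      linarith
  -- derivative of G
  have hderiv : ∀ u ∈ Ioo (0:ℝ) t, HasDerivAt G (g u) u := by
    intro u ⟨hu, hut⟩
    obtain ⟨h1, hA⟩ := hkey u hu.le hut
    have hcu1 : 1 ≤ Real.cosh u := Real.one_le_cosh u
    have hsA : 0 < Real.sqrt (1 - τ ^ 2 * Real.cosh u ^ 2) := Real.sqrt_pos.2 hA
    have hsinhu : 0 ≤ Real.sinh u := Real.sinh_nonneg_iff.2 hu.le
    set x := τ * Real.sinh u / Real.sqrt (1 - τ ^ 2) with hx
    have hx0 : 0 ≤ x := by positivity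
    have hx1 : x < 1 := by
      rw [hx, div_lt_one hs]
      have h2 : (τ * Real.sinh u) ^ 2 < Real.sqrt (1 - τ ^ 2) ^ 2 := by
        rw [Real.sq_sqrt h1τ2.le]; nlinarith [Real.cosh_sq u]
      nlinarith [Real.sqrt_nonneg (1 - τ ^ 2), hs]
    have hinner : HasDerivAt (fun v => τ * Real.sinh v / Real.sqrt (1 - τ ^ 2))
        (τ * Real.cosh u / Real.sqrt (1 - τ ^ 2)) u :=
      ((Real.hasDerivAt_sinh u).const_mul τ).div_const _
    have harc := (Real.hasDerivAt_arcsin (by linarith) (ne_of_lt hx1)).comp u hinner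
    have hGd := (hasDerivAt_id u).add harc
    have heval : 1 + 1 / Real.sqrt (1 - x ^ 2) * (τ * Real.cosh u / Real.sqrt (1 - τ ^ 2))
        = g u := by
      have h1x : 1 - x ^ 2 = (1 - τ ^ 2 * Real.cosh u ^ 2) / (1 - τ ^ 2) := by
        rw [hx, div_pow, Real.sq_sqrt h1τ2.le]
        field_simp
        nlinarith [Real.cosh_sq u]
      rw [h1x, Real.sqrt_div hA.le]
      simp only [hgdef]
      congr 1
      rw [one_div_div]
      field_simp [hsA.ne', hs.ne']
    have hGd' : HasDerivAt G
        (1 + 1 / Real.sqrt (1 - x ^ 2) * (τ * Real.cosh u / Real.sqrt (1 - τ ^ 2))) u := hGd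
    rwa [heval] at hGd'
  have hGcont : ContinuousOn G (Icc 0 t) :=
    (continuous_id.add (Real.continuous_arcsin.comp
      ((continuous_const.mul Real.continuous_sinh).div_const _))).continuousOn
  have hgnonneg : ∀ u ∈ Ioo (0:ℝ) t, 0 ≤ g u := by
    intro u _
    have h1 := Real.cosh_pos u
    have h2 := Real.sqrt_nonneg (1 - τ ^ 2 * Real.cosh u ^ 2)
    simp only [hgdef]
    positivity
  have hgint : IntervalIntegrable g volume 0 t := by
    apply intervalIntegrable_deriv_of_nonneg (g := G)
    · rw [Set.uIcc_of_le ht.le]; exact hGcont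
    · rw [min_eq_left ht.le, max_eq_right ht.le]; exact hderiv
    · rw [min_eq_left ht.le, max_eq_right ht.le]; exact hgnonneg
  have hfmeas : Measurable f := by
    apply Measurable.div measurable_const
    exact (Real.continuous_sqrt.comp (continuous_const.sub
      (continuous_const.mul (Real.continuous_cosh.pow 2)))).measurable
  have hfnonneg : ∀ u, 0 ≤ f u := fun u => div_nonneg zero_le_one (Real.sqrt_nonneg _)
  have hfint : IntervalIntegrable f volume 0 t := by
    rw [intervalIntegrable_iff_integrableOn_Ioc_of_le ht.le]
    refine Integrable.mono' ((intervalIntegrable_iff_integrableOn_Ioc_of_le ht.le).1 hgint)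
      hfmeas.aestronglyMeasurable ?_
    refine (ae_restrict_iff' measurableSet_Ioc).2 (Filter.Eventually.of_forall fun u hu => ?_)
    rw [Real.norm_eq_abs, abs_of_nonneg (hfnonneg u)]
    exact hbound u ⟨hu.1.le, hu.2⟩
  have hsinhtpos : 0 < Real.sinh t := by rwa [Real.sinh_pos_iff]
  have hint_g : ∫ u in (0:ℝ)..t, g u = t + Real.pi / 2 := by
    rw [integral_eq_sub_of_hasDeriv_right_of_le ht.le hGcont
      (fun x hx => (hderiv x hx).hasDerivWithinAt) hgint]
    have hst : (0:ℝ) < τ * Real.sinh t := mul_pos hτ hsinhtpos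
    simp [hGdef, hsq, div_self hst.ne', Real.arcsin_one, Real.arcsin_zero]
  have hint_lower : t ≤ ∫ u in (0:ℝ)..t, f u := by
    have h1 : ∫ u in (0:ℝ)..t, (1:ℝ) = t := by simp
    have h2 : (∫ u in (0:ℝ)..t, (1:ℝ)) ≤ ∫ u in (0:ℝ)..t, f u := ?_
    · linarith
    apply integral_mono_ae_restrict ht.le intervalIntegrable_const hfint
    have hne : ∀ᵐ x ∂(volume.restrict (Icc (0:ℝ) t)), x ≠ t := by
      refine ae_restrict_of_ae (MeasureTheory.ae_iff.mpr ?_)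
      simpa using measure_singleton t
    refine ((ae_restrict_mem measurableSet_Icc).and hne).mono ?_
    rintro u ⟨⟨hu0, hut⟩, hune⟩
    have hlt := lt_of_le_of_ne hut hune
    obtain ⟨h1', hA⟩ := hkey u hu0 hlt
    have hsA : 0 < Real.sqrt (1 - τ ^ 2 * Real.cosh u ^ 2) := Real.sqrt_pos.2 hA
    have hle1 : Real.sqrt (1 - τ ^ 2 * Real.cosh u ^ 2) ≤ 1 := by
      have hA1 : 1 - τ ^ 2 * Real.cosh u ^ 2 ≤ 1 := by
        nlinarith [mul_pos hτ (Real.cosh_pos u)]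
      calc Real.sqrt (1 - τ ^ 2 * Real.cosh u ^ 2) ≤ Real.sqrt 1 := Real.sqrt_le_sqrt hA1
        _ = 1 := Real.sqrt_one
    simp only [hfdef]
    exact one_le_one_div hsA hle1
  have hint_upper : (∫ u in (0:ℝ)..t, f u) ≤ t + Real.pi / 2 :=
    hint_g ▸ integral_mono_on ht.le hfint hgint hbound
  -- bounds on t
  have hc := Real.cosh_eq t
  have he : Real.exp (-t) ≤ Real.exp t := Real.exp_le_exp.2 (by linarith)
  have hepos := Real.exp_pos (-t)
  have hcosh_val : Real.cosh t = 1 / τ := by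
    rw [eq_div_iff hτ.ne']; linarith [heq]
  have h5 : 1 / τ ≤ Real.exp t := by rw [← hcosh_val, hc]; linarith
  have h6 : Real.exp t ≤ 2 / τ := by
    have : Real.exp t ≤ 2 * Real.cosh t := by rw [hc]; linarith
    rwa [hcosh_val, mul_one_div] at this
  have hlog1 : -Real.log τ ≤ t := by
    have h7 := Real.log_le_log (by positivity) h5
    rwa [Real.log_exp, one_div, Real.log_inv] at h7
  have hlog2 : t ≤ Real.log 2 - Real.log τ := by
    have h7 := Real.log_le_log (Real.exp_pos t) h6
    rwa [Real.log_exp, Real.log_div two_ne_zero hτ.ne'] at h7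
  have hlog2lt : Real.log 2 < 0.6931471808 := Real.log_two_lt_d9
  have hpi : Real.pi ≤ 4 := Real.pi_le_four
  rw [abs_le]
  constructor <;> simp only [hfdef] at hint_lower hint_upper <;> [linarith; linarith]
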